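/- Let μ be a Borel measure on ℝ, let n ≥ 2, and let φ : ℝ → ℝ be such that there exist real numbers x₁ < x₂ < ⋯ < xₙ with φ(x)·∏_{k=1}^n (x − x_k) ≥ 0 for all x ∈ ℝ. Suppose x ↦ x^k φ(x) ∈ L¹(μ) for all 0 ≤ k ≤ n, with ∫ x^k φ(x) dμ(x) = 0 for all 0 ≤ k ≤ n−1. Then for every function f : ℝ → ℝ that is (n−2)-times differentiable with convex (n−2)-nd derivative and f·φ ∈ L¹(μ), one has ∫ f·φ dμ ≥ 0. -/

import Mathlib

open MeasureTheory Set
open Polynomial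

/-- Rolle's theorem for several zeros: one differentiation step. -/
lemma kn_rolle_step (k : ℕ) (e : ℝ → ℝ) (he : Differentiable ℝ e)
    (ys : Fin (k + 2) → ℝ) (hys : StrictMono ys) (hz : ∀ i, e (ys i) = 0) :
    ∃ zs : Fin (k + 1) → ℝ, StrictMono zs ∧ ∀ i, deriv e (zs i) = 0 := by
  have key : ∀ i : Fin (k + 1),
      ∃ c ∈ Set.Ioo (ys i.castSucc) (ys i.succ), deriv e c = 0 := by
    intro i
    exact exists_deriv_eq_zero (hys (Fin.castSucc_lt_succ (i := i)))
      he.continuous.continuousOn (by rw [hz, hz])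
  choose zs hzmem hz0 using key
  refine ⟨zs, ?_, hz0⟩
  intro i j hij
  calc zs i < ys i.succ := (hzmem i).2
    _ ≤ ys j.castSucc := hys.monotone (by
        rw [Fin.le_def]
        simp only [Fin.val_succ, Fin.coe_castSucc]
        exact Fin.lt_def.mp hij)
    _ < zs j := (hzmem j).1

/-- Iterated Rolle: from `m + j + 1` zeros of `e` get `j + 1` zeros of the `m`-th derivative. -/
lemma kn_rolle_iter (m : ℕ) : ∀ (j N : ℕ) (e : ℝ → ℝ), N = m + j + 1 →
    (∀ k < m, Differentiable ℝ (iteratedDeriv k e)) →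
    ∀ ys : Fin N → ℝ, StrictMono ys → (∀ i, e (ys i) = 0) →
    ∃ zs : Fin (j + 1) → ℝ, StrictMono zs ∧ ∀ i, iteratedDeriv m e (zs i) = 0 := by
  induction m with
  | zero =>
    intro j N e hN _ ys hys hz
    refine ⟨fun i => ys (Fin.cast (by omega) i), ?_, ?_⟩
    · intro i j hij
      apply hys
      simp only [Fin.lt_def, Fin.coe_cast]
      exact Fin.lt_def.mp hij
    · intro i; simpa [iteratedDeriv_zero] using hz _
  | succ m ih =>
    intro j N e hN hd ys hys hz
    have hde : Differentiable ℝ e := by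
      have := hd 0 (by omega); rwa [iteratedDeriv_zero] at this
    obtain ⟨ws, hws, hw0⟩ := kn_rolle_step (m + j) e hde
      (fun i => ys (Fin.cast (by omega) i))
      (fun i j hij => hys (by simp only [Fin.lt_def, Fin.coe_cast]; exact Fin.lt_def.mp hij))
      (fun i => hz _)
    obtain ⟨zs, hzs, hz0⟩ := ih j (m + j + 1) (deriv e) rfl
      (fun k hk => by
        have := hd (k + 1) (by omega)
        rwa [iteratedDeriv_succ'] at this) ws hws hw0
    exact ⟨zs, hzs, fun i => by rw [iteratedDeriv_succ']; exact hz0 i⟩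

/-- Iterated derivative of `f` minus a polynomial. -/
lemma kn_iter_sub_poly (f : ℝ → ℝ) (m : ℕ)
    (hd : ∀ k < m, Differentiable ℝ (iteratedDeriv k f)) (p : Polynomial ℝ) :
    ∀ k ≤ m, iteratedDeriv k (fun x => f x - p.eval x)
      = fun x => iteratedDeriv k f x - (Polynomial.derivative^[k] p).eval x := by
  intro k
  induction k with
  | zero => intro _; simp [iteratedDeriv_zero]
  | succ k ihk =>
    intro hk
    rw [iteratedDeriv_succ, ihk (by omega), iteratedDeriv_succ]
    funext x
    rw [Function.iterate_succ_apply']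
    have h1 : DifferentiableAt ℝ (iteratedDeriv k f) x := (hd k (by omega)).differentiableAt
    have h2 : DifferentiableAt ℝ (fun y => (Polynomial.derivative^[k] p).eval y) x :=
      (Polynomial.differentiable _).differentiableAt
    rw [deriv_fun_sub h1 h2, Polynomial.deriv]

/-- Key sign lemma: the interpolation error has the sign of `∏ (x - xₖ)`
when the `(n-2)`-nd derivative of `f` is convex. -/
lemma kn_key_sign (n : ℕ) (hn : 2 ≤ n) (xs : Fin n → ℝ) (hxs : StrictMono xs)
    (f : ℝ → ℝ)
    (hdiff : ∀ k < n - 2, Differentiable ℝ (iteratedDeriv k f))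
    (hconv : ConvexOn ℝ Set.univ (iteratedDeriv (n - 2) f)) (x₀ : ℝ) :
    0 ≤ (f x₀ - (Lagrange.interpolate Finset.univ xs (fun i => f (xs i))).eval x₀)
      * ∏ k : Fin n, (x₀ - xs k) := by
  set m := n - 2 with hm
  have hmn : n = m + 2 := by omega
  set H : Polynomial ℝ := Lagrange.interpolate Finset.univ xs (fun i => f (xs i)) with hH
  set P : Polynomial ℝ := ∏ k : Fin n, (Polynomial.X - Polynomial.C (xs k)) with hP
  have hPeval : ∀ x : ℝ, P.eval x = ∏ k : Fin n, (x - xs k) := by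
    intro x; simp [hP, Polynomial.eval_prod]
  by_contra hneg
  push_neg at hneg
  rw [← hPeval] at hneg
  have hP0 : P.eval x₀ ≠ 0 := by
    intro h; rw [h, mul_zero] at hneg; exact lt_irrefl 0 hneg
  set D : ℝ := (f x₀ - H.eval x₀) / P.eval x₀ with hD
  have hDneg : D < 0 := by
    rcases mul_neg_iff.mp hneg with ⟨h1, h2⟩ | ⟨h1, h2⟩
    · exact div_neg_of_pos_of_neg h1 h2
    · exact div_neg_of_neg_of_pos h1 h2
  set p : Polynomial ℝ := H + Polynomial.C D * P with hp
  set e : ℝ → ℝ := fun x => f x - p.eval x with he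
  -- zeros of e
  have hinj : Set.InjOn xs (Finset.univ : Finset (Fin n)) := fun a _ b _ h => hxs.injective h
  have hezero : ∀ i : Fin n, e (xs i) = 0 := by
    intro i
    have h1 : H.eval (xs i) = f (xs i) :=
      Lagrange.eval_interpolate_at_node (fun i => f (xs i)) hinj (Finset.mem_univ i)
    have h2 : P.eval (xs i) = 0 := by
      rw [hPeval]
      exact Finset.prod_eq_zero (Finset.mem_univ i) (sub_self _)
    simp [he, hp, h1, h2]
  have hex0 : e x₀ = 0 := by
    have : D * P.eval x₀ = f x₀ - H.eval x₀ := div_mul_cancel₀ _ hP0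
    simp [he, hp, this]
  -- x₀ is not a node
  have hx0ne : ∀ i : Fin n, x₀ ≠ xs i := by
    intro i h
    apply hP0
    rw [hPeval]
    exact Finset.prod_eq_zero (Finset.mem_univ i) (by rw [h, sub_self])
  -- the finset of n+1 zeros
  set s : Finset ℝ := insert x₀ (Finset.image xs Finset.univ) with hs
  have hx0mem : x₀ ∉ Finset.image xs Finset.univ := by
    simp only [Finset.mem_image, Finset.mem_univ, true_and, not_exists]
    intro i h; exact hx0ne i h.symm
  have hcard : s.card = m + 2 + 1 := by
    rw [hs, Finset.card_insert_of_notMem hx0mem,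
      Finset.card_image_of_injective _ hxs.injective]
    simp [hmn]
  set ys : Fin (m + 2 + 1) → ℝ := fun i => (s.orderIsoOfFin hcard i : ℝ) with hys
  have hysmono : StrictMono ys := by
    intro i j hij
    exact_mod_cast (s.orderIsoOfFin hcard).strictMono hij
  have hyszero : ∀ i, e (ys i) = 0 := by
    intro i
    have : ys i ∈ s := (s.orderIsoOfFin hcard i).2
    rw [hs, Finset.mem_insert] at this
    rcases this with h | h
    · rw [h]; exact hex0
    · obtain ⟨k, _, hk⟩ := Finset.mem_image.mp h
      rw [← hk]; exact hezero k
  -- differentiability of e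
  have hesub := kn_iter_sub_poly f m hdiff p
  have hediff : ∀ k < m, Differentiable ℝ (iteratedDeriv k e) := by
    intro k hk
    rw [he, hesub k (le_of_lt hk)]
    exact (hdiff k hk).sub (Polynomial.differentiable _)
  -- iterated Rolle
  obtain ⟨zs, hzs, hz0⟩ := kn_rolle_iter m 2 (m + 2 + 1) e rfl hediff ys hysmono hyszero
  -- the (n-2)-nd derivative of e
  set q : Polynomial ℝ := Polynomial.derivative^[m] p with hq
  have hGeq : iteratedDeriv m e = fun x => iteratedDeriv m f x - q.eval x := by
    rw [he]; exact hesub m le_rfl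
  -- degree bookkeeping
  have hHdeg : H.natDegree < n := by
    by_cases h0 : H = 0
    · rw [h0]; simpa using (by omega : 0 < n)
    · have := Lagrange.degree_interpolate_lt (fun i => f (xs i)) hinj
      rw [← hH] at this
      have hcardn : (Finset.univ : Finset (Fin n)).card = n := by simp
      rw [hcardn] at this
      exact Polynomial.natDegree_lt_iff_degree_lt h0 |>.mpr (by exact_mod_cast this)
  have hPmonic : P.Monic := Polynomial.monic_prod_of_monic _ _
    (fun k _ => Polynomial.monic_X_sub_C _)
  have hPdeg : P.natDegree = n := by
    rw [hP, Polynomial.natDegree_prod _ _ (fun k _ => Polynomial.X_sub_C_ne_zero _)]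
    simp [Polynomial.natDegree_X_sub_C]
  have hpdeg : p.natDegree ≤ n := by
    refine le_trans (Polynomial.natDegree_add_le _ _) (max_le (le_of_lt hHdeg) ?_)
    refine le_trans (Polynomial.natDegree_mul_le) ?_
    simp [hPdeg]
  have hqdeg : q.natDegree ≤ 2 := by
    refine le_trans (Polynomial.natDegree_iterate_derivative _ _) ?_
    omega
  -- leading coefficient of q
  have hpcoeff : p.coeff n = D := by
    rw [hp, Polynomial.coeff_add, Polynomial.coeff_eq_zero_of_natDegree_lt hHdeg,
      Polynomial.coeff_C_mul]
    have : P.coeff n = 1 := by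
      have := hPmonic.coeff_natDegree
      rwa [hPdeg] at this
    rw [this]; ring
  have hq2 : q.coeff 2 < 0 := by
    rw [hq, Polynomial.coeff_iterate_derivative]
    have h2m : 2 + m = n := by omega
    rw [h2m, hpcoeff]
    have hpos : 0 < n.descFactorial m :=
      Nat.pos_of_ne_zero (fun h => absurd (Nat.descFactorial_eq_zero_iff_lt.mp h) (by omega))
    rw [nsmul_eq_mul]
    have : (0 : ℝ) < (n.descFactorial m : ℝ) := by exact_mod_cast hpos
    exact mul_neg_of_pos_of_neg this hDneg
  -- expand eval q
  have hqeval : ∀ x : ℝ, q.eval x = q.coeff 0 + q.coeff 1 * x + q.coeff 2 * x ^ 2 := by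
    intro x
    rw [Polynomial.eval_eq_sum_range' (show q.natDegree < 3 by omega) x]
    rw [Finset.sum_range_succ, Finset.sum_range_succ, Finset.sum_range_one]
    ring
  -- strict convexity
  set g : ℝ → ℝ := iteratedDeriv m f with hg
  have hsc : StrictConvexOn ℝ Set.univ (fun x : ℝ => (-q.coeff 2) * x ^ 2) := by
    have h2 := Even.strictConvexOn_pow (even_two) (two_ne_zero)
    refine ⟨convex_univ, fun x _ y _ hxy a b ha hb hab => ?_⟩
    have := h2.2 (Set.mem_univ x) (Set.mem_univ y) hxy ha hb hab
    simp only [smul_eq_mul] at this ⊢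
    nlinarith [this, hq2]
  have haff : ConvexOn ℝ Set.univ (fun x : ℝ => -(q.coeff 1) * x - q.coeff 0) := by
    refine ⟨convex_univ, fun x _ y _ a b ha hb hab => le_of_eq ?_⟩
    simp only [smul_eq_mul]
    linear_combination (q.coeff 0) * hab
  have hcv : ConvexOn ℝ Set.univ (fun x : ℝ => g x + (-(q.coeff 1) * x - q.coeff 0)) :=
    hconv.add haff
  have hF := hcv.add_strictConvexOn hsc
  set F : ℝ → ℝ := (fun x : ℝ => g x + (-(q.coeff 1) * x - q.coeff 0))
    + (fun x : ℝ => (-q.coeff 2) * x ^ 2) with hFdef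
  have hFval : ∀ x : ℝ, F x = iteratedDeriv m e x := by
    intro x
    rw [hGeq]
    simp only [hFdef, Pi.add_apply]
    rw [hqeval x]
    ring
  -- the three zeros give a contradiction
  set a := zs 0 with ha
  set b := zs 1 with hb
  set c := zs 2 with hc
  have hab' : a < b := hzs (by norm_num [Fin.lt_def])
  have hbc : b < c := hzs (by norm_num [Fin.lt_def])
  have hac : a < c := lt_trans hab' hbc
  have hFa : F a = 0 := by rw [hFval]; exact hz0 0
  have hFb : F b = 0 := by rw [hFval]; exact hz0 1
  have hFc : F c = 0 := by rw [hFval]; exact hz0 2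
  set t : ℝ := (c - b) / (c - a) with ht
  set u : ℝ := (b - a) / (c - a) with hu
  have hca : (0 : ℝ) < c - a := by linarith
  have htpos : 0 < t := div_pos (by linarith) hca
  have hupos : 0 < u := div_pos (by linarith) hca
  have htu : t + u = 1 := by
    rw [ht, hu, ← add_div, div_eq_one_iff_eq (ne_of_gt hca)]
    ring
  have hcomb : t • a + u • c = b := by
    simp only [smul_eq_mul, ht, hu]
    field_simp
    ring
  have := hF.2 (Set.mem_univ a) (Set.mem_univ c) (ne_of_lt hac) htpos hupos htu
  rw [hcomb, hFa, hFb, hFc] at this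
  simp at this

/-- **Theorem 5.4 (Karlin–Novikoff criteria).** Let `μ` be a Borel measure on `ℝ`,
`n ≥ 2`, and `φ : ℝ → ℝ` with `φ(x) ∏ₖ (x - xₖ) ≥ 0` for some `x₁ < ⋯ < xₙ`.
If `x^k φ(x) ∈ L¹(μ)` for `k ≤ n` and `∫ x^k φ dμ = 0` for `k ≤ n - 1`, then
`∫ f φ dμ ≥ 0` for every `f` that is `(n-2)`-times differentiable with convex
`(n-2)`-nd derivative and `f φ ∈ L¹(μ)`. -/
theorem karlin_novikoff_criteria
    (μ : Measure ℝ) (n : ℕ) (hn : 2 ≤ n)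
    (φ : ℝ → ℝ) (xs : Fin n → ℝ) (hxs : StrictMono xs)
    (hsign : ∀ x : ℝ, 0 ≤ φ x * ∏ k : Fin n, (x - xs k))
    (hint : ∀ k ≤ n, Integrable (fun x => x ^ k * φ x) μ)
    (hmom : ∀ k ≤ n - 1, (∫ x, x ^ k * φ x ∂μ) = 0)
    (f : ℝ → ℝ)
    (hdiff : ∀ k < n - 2, Differentiable ℝ (iteratedDeriv k f))
    (hconv : ConvexOn ℝ Set.univ (iteratedDeriv (n - 2) f))
    (hfφ : Integrable (fun x => f x * φ x) μ) :
    0 ≤ ∫ x, f x * φ x ∂μ := by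
  classical
  set H : Polynomial ℝ := Lagrange.interpolate Finset.univ xs (fun i => f (xs i)) with hH
  have hinj : Set.InjOn xs (Finset.univ : Finset (Fin n)) := fun a _ b _ h => hxs.injective h
  have hHdeg : H.natDegree < n := by
    by_cases h0 : H = 0
    · rw [h0]; simpa using (by omega : 0 < n)
    · have := Lagrange.degree_interpolate_lt (fun i => f (xs i)) hinj
      rw [← hH] at this
      have hcardn : (Finset.univ : Finset (Fin n)).card = n := by simp
      rw [hcardn] at this
      exact Polynomial.natDegree_lt_iff_degree_lt h0 |>.mpr (by exact_mod_cast this)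
  -- expansion of H·φ
  have hexp : (fun x => H.eval x * φ x)
      = fun x => ∑ i ∈ Finset.range n, H.coeff i * (x ^ i * φ x) := by
    funext x
    rw [Polynomial.eval_eq_sum_range' hHdeg x, Finset.sum_mul]
    exact Finset.sum_congr rfl (fun i _ => by ring)
  have hHint : Integrable (fun x => H.eval x * φ x) μ := by
    rw [hexp]
    exact integrable_finset_sum _ (fun i hi =>
      ((hint i (le_of_lt (Finset.mem_range.mp hi))).const_mul _))
  have hHmom : (∫ x, H.eval x * φ x ∂μ) = 0 := by
    rw [hexp, integral_finset_sum _ (fun i hi =>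
      ((hint i (le_of_lt (Finset.mem_range.mp hi))).const_mul _))]
    refine Finset.sum_eq_zero (fun i hi => ?_)
    rw [integral_const_mul, hmom i (by have := Finset.mem_range.mp hi; omega), mul_zero]
  -- pointwise nonnegativity of (f - H)·φ
  have hptwise : ∀ x : ℝ, 0 ≤ (f x - H.eval x) * φ x := by
    intro x
    have hkey := kn_key_sign n hn xs hxs f hdiff hconv x
    rw [← hH] at hkey
    rcases eq_or_ne (∏ k : Fin n, (x - xs k)) 0 with h0 | h0
    · -- x is a node
      obtain ⟨i, _, hi⟩ := Finset.prod_eq_zero_iff.mp h0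
      have hx : x = xs i := by linarith [sub_eq_zero.mp hi]
      have : H.eval x = f x := by
        rw [hx]
        exact Lagrange.eval_interpolate_at_node (fun i => f (xs i)) hinj (Finset.mem_univ i)
      rw [this, sub_self, zero_mul]
    · have hsq : 0 < (∏ k : Fin n, (x - xs k)) ^ 2 := by positivity
      nlinarith [mul_nonneg hkey (hsign x)]
  have hsubint : Integrable (fun x => (f x - H.eval x) * φ x) μ := by
    have := hfφ.sub hHint
    simpa [sub_mul, Pi.sub_def] using this
  have hsplit : (fun x => f x * φ x)
      = fun x => (f x - H.eval x) * φ x + H.eval x * φ x := by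
    funext x; ring
  rw [hsplit, integral_add hsubint hHint, hHmom, add_zero]
  exact integral_nonneg hptwise
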